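/- Let 0 < P_fa < P_d ≤ 1 and 0 < π_{1,0} < π_{1,1} < 1 with P_d · π_{1,0} > P_fa · π_{1,1}. Then (1−π_{1,0})/(1−π_{1,1}) + (P_fa/P_d)·log(π_{1,0}/π_{1,1}) > π_{1,0}/π_{1,1} + (P_fa/P_d)·log((1−π_{1,0})/(1−π_{1,1})). -/
import Mathlib


/-- Sign condition on `dD_k/dε > 0` for deviations `(p, p − ε)`:
`(1−π₁₀)/(1−π₁₁) + (P_fa/P_d)·log(π₁₀/π₁₁) > π₁₀/π₁₁ + (P_fa/P_d)·log((1−π₁₀)/(1−π₁₁))`. -/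
theorem stmt_6 (Pfa Pd π10 π11 : ℝ)
    (hPfa : 0 < Pfa) (hPfaPd : Pfa < Pd) (hPd : Pd ≤ 1)
    (hπ10 : 0 < π10) (hπ : π10 < π11) (hπ11 : π11 < 1)
    (hcross : Pd * π10 > Pfa * π11) :
    (1 - π10) / (1 - π11) + (Pfa / Pd) * Real.log (π10 / π11) >
      π10 / π11 + (Pfa / Pd) * Real.log ((1 - π10) / (1 - π11)) := by
  have hPd0 : (0:ℝ) < Pd := hPfa.trans hPfaPd
  have hπ11' : (0:ℝ) < π11 := hπ10.trans hπ
  have h1π11 : (0:ℝ) < 1 - π11 := by linarith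
  set a := π10 / π11 with hadef
  set b := (1 - π10) / (1 - π11) with hbdef
  set c := Pfa / Pd with hcdef
  have ha : 0 < a := div_pos hπ10 hπ11'
  have ha1 : a < 1 := (div_lt_one hπ11').mpr hπ
  have hb1 : 1 < b := (one_lt_div h1π11).mpr (by linarith)
  have hc : 0 < c := div_pos hPfa hPd0
  have hca : c < a := (div_lt_div_iff₀ hPd0 hπ11').mpr (by nlinarith)
  have hb0 : 0 < b := lt_trans one_pos hb1
  have h1 : Real.log b ≤ b - 1 := Real.log_le_sub_one_of_pos hb0
  have h2 : Real.log a⁻¹ ≤ a⁻¹ - 1 := Real.log_le_sub_one_of_pos (by positivity)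
  rw [Real.log_inv] at h2
  have hai : a * a⁻¹ = 1 := mul_inv_cancel₀ (ne_of_gt ha)
  have hainv : 1 < a⁻¹ := (one_lt_inv₀ ha).mpr ha1
  nlinarith [mul_le_mul_of_nonneg_left h1 hc.le, mul_le_mul_of_nonneg_left h2 hc.le,
    mul_pos hc (mul_pos (sub_pos.mpr hb1) (sub_pos.mpr hainv)),
    mul_lt_mul_of_pos_right hca (sub_pos.mpr hainv),
    mul_lt_mul_of_pos_right hca (sub_pos.mpr hb1)]
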